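/- Let G be a finite simple graph with n ≥ 1 vertices and let I = (I₁, I₂, I₃) be a partition of the vertices of H = G × K₃ with #I₁ = #I₂ = #I₃ = n which is not a proper 3-coloring of H (i.e. some class contains two adjacent vertices). Then Béz(A(H); I₁, I₂, I₃) ≥ 2^n · (3n)!/(n!)³. -/

import Mathlib

open Finset

open Classical in
/-- The support `A(H)` of a graph `H`: the exponent vectors `e_{v₁} + ⋯ + e_{v_s}`
(indicator vectors) of the cliques `{v₁, …, v_s}` of `H` of size `s ≤ 3`. -/
noncomputable def graphSupport {V : Type*} [Fintype V] (H : SimpleGraph V) :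
    Finset (V → ℕ) :=
  ((Finset.univ : Finset (Finset V)).filter
      (fun T : Finset V => T.card ≤ 3 ∧ H.IsClique (T : Set V))).image
    (fun T v => if v ∈ T then 1 else 0)

/-- The multi-homogeneous Bézout number of a support `A` with respect to the family
of groups of variables `I₁, …, I_k`, namely `(m!/(a₁!⋯a_k!)) · ∏_j d_j ^ a_j` where
`a_j = #I_j` and `d_j = max_{α ∈ A} ∑_{l ∈ I_j} α_l`. -/
noncomputable def bez {V : Type*} [Fintype V] (A : Finset (V → ℕ))
    {k : ℕ} (I : Fin k → Finset V) : ℕ :=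
  Nat.multinomial Finset.univ (fun j => (I j).card) *
    ∏ j, (A.sup fun α => ∑ l ∈ I j, α l) ^ (I j).card

/-- `I₁, …, I_k` is a partition of the (finite) type `V`: the classes are pairwise
disjoint and they cover `V`. -/
def IsPartitionFam {V : Type*} {k : ℕ} (I : Fin k → Finset V) : Prop :=
  (∀ i j, i ≠ j → Disjoint (I i) (I j)) ∧ ∀ v, ∃ j, v ∈ I j

/-- The family of classes `I₁, …, I_k` is a proper coloring of `H`: no class contains
two adjacent vertices. -/
def ProperFam {V : Type*} (H : SimpleGraph V) {k : ℕ} (I : Fin k → Finset V) : Prop :=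
  ∀ j, ∀ u ∈ I j, ∀ v ∈ I j, ¬ H.Adj u v

/-- The minimal multi-homogeneous Bézout number of a support `A`, over all partitions
of the set of variables. -/
noncomputable def minBez {V : Type*} [Fintype V] (A : Finset (V → ℕ)) : ℕ :=
  sInf {b : ℕ | ∃ (k : ℕ) (I : Fin k → Finset V), IsPartitionFam I ∧ bez A I = b}

open Classical in
/-- The `l`-fold cartesian product `A^l` of a support `A ⊆ ℕ^V`: the concatenations
`(α⁽¹⁾, …, α⁽ˡ⁾)` of members of `A`, indexed by `Fin l × V`. -/
noncomputable def powSupport {V : Type*} [Fintype V] (A : Finset (V → ℕ)) (l : ℕ) :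
    Finset (Fin l × V → ℕ) :=
  (Fintype.piFinset (fun _ : Fin l => A)).image (fun f p => f p.1 p.2)

/-- If `(I₁, I₂, I₃)` is a partition of the vertices of `H = G □ K₃`
with `#I₁ = #I₂ = #I₃ = n` which is not a proper 3-coloring of `H`, then
`Béz(A(H); I₁, I₂, I₃) ≥ 2^n · (3n)!/(n!)³`. -/
theorem stmt_15 {V : Type*} [Fintype V] (G : SimpleGraph V) (n : ℕ)
    (hn : Fintype.card V = n) (hn1 : 1 ≤ n)
    (I : Fin 3 → Finset (V × Fin 3)) (hpart : IsPartitionFam I)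
    (hcard : ∀ j, (I j).card = n)
    (hproper : ¬ ProperFam (G.boxProd (SimpleGraph.completeGraph (Fin 3))) I) :
    2 ^ n * ((3 * n).factorial / n.factorial ^ 3) ≤
      bez (graphSupport (G.boxProd (SimpleGraph.completeGraph (Fin 3)))) I := by
  classical
  set H := G.boxProd (SimpleGraph.completeGraph (Fin 3)) with hH
  set A := graphSupport H with hA
  set d : Fin 3 → ℕ := fun j => A.sup (fun α => ∑ l ∈ I j, α l) with hd
  have hmemA : ∀ T : Finset (V × Fin 3), T.card ≤ 3 → H.IsClique (T : Set (V × Fin 3)) →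
      (fun w => if w ∈ T then 1 else 0) ∈ A := by
    intro T hT1 hT2
    rw [hA, graphSupport]
    simp only [Finset.mem_image, Finset.mem_filter, Finset.mem_univ, true_and]
    exact ⟨T, ⟨hT1, hT2⟩, by funext w; by_cases h : w ∈ T <;> simp [h]⟩
  have hsum : ∀ (j : Fin 3) (T : Finset (V × Fin 3)), T ⊆ I j →
      T.card ≤ (∑ l ∈ I j, (fun w => if w ∈ T then 1 else 0) l) := by
    intro j T hTsub
    calc T.card = ∑ _l ∈ T, 1 := Finset.card_eq_sum_ones T
      _ = ∑ l ∈ T, (fun w : V × Fin 3 => if w ∈ T then 1 else 0) l :=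
          Finset.sum_congr rfl fun l hl => by simp [hl]
      _ ≤ _ := Finset.sum_le_sum_of_subset hTsub
  have h1 : ∀ j, 1 ≤ d j := by
    intro j
    obtain ⟨v, hv⟩ := Finset.card_pos.mp (by rw [hcard]; omega : 0 < (I j).card)
    have hmem := hmemA {v} (by simp) (by simp)
    have := hsum j {v} (by simpa using hv)
    simp only [Finset.card_singleton] at this
    exact this.trans (Finset.le_sup hmem)
  -- some class contains an edge
  rw [ProperFam] at hproper
  push_neg at hproper
  obtain ⟨j0, u, hu, v, hv, hadj⟩ := hproper
  have huv : u ≠ v := hadj.ne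
  have h2 : 2 ≤ d j0 := by
    have hclique : H.IsClique (({u, v} : Finset (V × Fin 3)) : Set (V × Fin 3)) := by
      simp only [Finset.coe_insert, Finset.coe_singleton]
      exact (SimpleGraph.isClique_pair).mpr fun _ => hadj
    have hmem := hmemA {u, v} (by
      have := Finset.card_insert_le u {v}
      simp at this ⊢; omega) hclique
    have hsub : ({u, v} : Finset (V × Fin 3)) ⊆ I j0 := by
      intro x hx
      rcases Finset.mem_insert.mp hx with h | h
      · exact h ▸ hu
      · exact (Finset.mem_singleton.mp h) ▸ hv
    have hc : ({u, v} : Finset (V × Fin 3)).card = 2 := Finset.card_pair huv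
    have := hsum j0 {u, v} hsub
    rw [hc] at this
    exact this.trans (Finset.le_sup hmem)
  have hprod : 2 ^ n ≤ ∏ j, d j ^ n := by
    calc 2 ^ n ≤ d j0 ^ n := Nat.pow_le_pow_left h2 n
      _ ≤ ∏ j, d j ^ n :=
        Finset.single_le_prod' (fun j _ => Nat.one_le_pow _ _ (h1 j)) (Finset.mem_univ j0)
  have hmult : Nat.multinomial Finset.univ (fun j => (I j).card) =
      (3 * n).factorial / n.factorial ^ 3 := by
    simp only [hcard, Nat.multinomial]
    congr 1
    · congr 1
      simp [Finset.sum_const, mul_comm]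
    · simp [Finset.prod_const]
  rw [bez, hmult]
  simp only [hcard]
  calc 2 ^ n * ((3 * n).factorial / n.factorial ^ 3)
      ≤ (∏ j, d j ^ n) * ((3 * n).factorial / n.factorial ^ 3) :=
        Nat.mul_le_mul_right _ hprod
    _ = ((3 * n).factorial / n.factorial ^ 3) * ∏ j, d j ^ n := mul_comm _ _
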